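/- If 0 < x_1 < ... < x_{n+1} < 1, the multipliers of the Neville elimination of the transpose A^T of the Bernstein–Vandermonde matrix satisfy the simple closed form m̃_{i,j} = (n-i+2)·x_j / ((i-1)·(1-x_j)) for 1 ≤ j ≤ n and j+1 ≤ i ≤ n+1, where m̃_{i,j} = p̃_{i,j}/p̃_{i-1,j} and p̃_{i,j} = det A^T[i-j+1,...,i | 1,...,j] / det A^T[i-j+1,...,i-1 | 1,...,j-1]. -/

import Mathlib

/-- Minor of the transpose of the Bernstein–Vandermonde matrix with rows r,...,r+j-1
and columns 1,...,j (1-based paper indexing). -/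
noncomputable def bvMinorT (n : ℕ) (x : ℕ → ℝ) (r j : ℕ) : ℝ :=
  (Matrix.of fun a c : Fin j =>
    (n.choose (r + (a : ℕ) - 1) : ℝ) * (1 - x ((c : ℕ) + 1)) ^ (n - (r + (a : ℕ) - 1)) *
      x ((c : ℕ) + 1) ^ (r + (a : ℕ) - 1)).det

/-- Neville pivot of the transpose. -/
noncomputable def bvPivotT (n : ℕ) (x : ℕ → ℝ) (i j : ℕ) : ℝ :=
  bvMinorT n x (i - j + 1) j / bvMinorT n x (i - j + 1) (j - 1)

/-- Neville multiplier of the transpose. -/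
noncomputable def bvMultT (n : ℕ) (x : ℕ → ℝ) (i j : ℕ) : ℝ :=
  bvPivotT n x i j / bvPivotT n x (i - 1) j

noncomputable def bvB (n e m : ℕ) : ℝ := ∏ a : Fin m, (n.choose (e + (a : ℕ)) : ℝ)

noncomputable def bvG (x : ℕ → ℝ) (n e m : ℕ) : ℝ :=
  ∏ c : Fin m, ((1 - x ((c : ℕ) + 1)) ^ n * (x ((c : ℕ) + 1) / (1 - x ((c : ℕ) + 1))) ^ e)

noncomputable def bvT (x : ℕ → ℝ) (m : ℕ) : ℝ :=
  ∏ c : Fin m, x ((c : ℕ) + 1) / (1 - x ((c : ℕ) + 1))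

noncomputable def bvV (x : ℕ → ℝ) (m : ℕ) : ℝ :=
  ∏ a : Fin m, ∏ b ∈ Finset.Ioi a,
    (x ((b : ℕ) + 1) / (1 - x ((b : ℕ) + 1)) - x ((a : ℕ) + 1) / (1 - x ((a : ℕ) + 1)))

lemma bvMinorT_eq (n : ℕ) (x : ℕ → ℝ) (e m : ℕ) (hem : e + m ≤ n + 1)
    (hx1 : ∀ c, 1 ≤ c → c ≤ m → 1 - x c ≠ 0) :
    bvMinorT n x (e + 1) m = bvB n e m * (bvG x n e m * bvV x m) := by
  have hmat : (Matrix.of fun a c : Fin m =>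
      (n.choose (e + 1 + (a : ℕ) - 1) : ℝ) * (1 - x ((c : ℕ) + 1)) ^ (n - (e + 1 + (a : ℕ) - 1)) *
        x ((c : ℕ) + 1) ^ (e + 1 + (a : ℕ) - 1))
      = Matrix.of fun a c : Fin m => (n.choose (e + (a : ℕ)) : ℝ) *
          (Matrix.of (fun a c : Fin m =>
            ((1 - x ((c : ℕ) + 1)) ^ n * (x ((c : ℕ) + 1) / (1 - x ((c : ℕ) + 1))) ^ e) *
            (Matrix.of (fun a c : Fin m =>
              (x ((c : ℕ) + 1) / (1 - x ((c : ℕ) + 1))) ^ (a : ℕ))) a c) a c) := by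
    ext a c
    have h1 : e + 1 + (a : ℕ) - 1 = e + (a : ℕ) := by omega
    have hc : 1 - x ((c : ℕ) + 1) ≠ 0 := hx1 _ (by omega) (by omega)
    have hk : e + (a : ℕ) ≤ n := by have := a.isLt; omega
    simp only [Matrix.of_apply, h1]
    rw [pow_sub₀ _ hc hk]
    rw [div_pow, div_pow]
    field_simp
    ring
  rw [bvMinorT, hmat, Matrix.det_mul_column, Matrix.det_mul_row]
  have hv : (Matrix.of (fun a c : Fin m =>
      (x ((c : ℕ) + 1) / (1 - x ((c : ℕ) + 1))) ^ (a : ℕ)))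
      = (Matrix.vandermonde fun c : Fin m =>
          x ((c : ℕ) + 1) / (1 - x ((c : ℕ) + 1))).transpose := by
    ext a c
    simp [Matrix.vandermonde, Matrix.transpose_apply]
  rw [hv, Matrix.det_transpose, Matrix.det_vandermonde]
  simp only [bvB, bvG, bvV]

lemma bvB_succ (n e m : ℕ) :
    (n.choose e : ℝ) * bvB n (e + 1) m = bvB n e m * (n.choose (e + m) : ℝ) := by
  have h1 : bvB n e (m + 1) = bvB n e m * (n.choose (e + m) : ℝ) := by
    simp only [bvB, Fin.prod_univ_castSucc, Fin.coe_castSucc, Fin.val_last]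
  have h2 : bvB n e (m + 1) = (n.choose e : ℝ) * bvB n (e + 1) m := by
    simp only [bvB, Fin.prod_univ_succ, Fin.val_zero, add_zero, Fin.val_succ]
    congr 1
    apply Finset.prod_congr rfl
    intro a _
    have : e + 1 + (a : ℕ) = e + ((a : ℕ) + 1) := by omega
    rw [this]
  rw [← h2, h1]

lemma bvG_succ (x : ℕ → ℝ) (n e m : ℕ) :
    bvG x n (e + 1) m = bvG x n e m * bvT x m := by
  simp only [bvG, bvT]
  rw [← Finset.prod_mul_distrib]
  apply Finset.prod_congr rfl
  intro c _
  ring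

lemma bvT_succ (x : ℕ → ℝ) (m : ℕ) :
    bvT x (m + 1) = bvT x m * (x (m + 1) / (1 - x (m + 1))) := by
  simp only [bvT, Fin.prod_univ_castSucc, Fin.coe_castSucc, Fin.val_last]

set_option maxHeartbeats 1000000 in
theorem bernstein_vandermonde_transpose_multipliers (n : ℕ) (x : ℕ → ℝ)
    (hx : ∀ k, 1 ≤ k → k ≤ n + 1 → 0 < x k ∧ x k < 1)
    (hmono : ∀ k l, 1 ≤ k → k < l → l ≤ n + 1 → x k < x l)
    (i j : ℕ) (hj1 : 1 ≤ j) (hj2 : j ≤ n) (hi1 : j + 1 ≤ i) (hi2 : i ≤ n + 1) :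
    bvMultT n x i j = ((n : ℝ) - i + 2) * x j / (((i : ℝ) - 1) * (1 - x j)) := by
  obtain ⟨m, rfl⟩ : ∃ m, j = m + 1 := ⟨j - 1, by omega⟩
  obtain ⟨k, rfl⟩ : ∃ k, i = m + 2 + k := ⟨i - (m + 2), by omega⟩
  have hx1 : ∀ c, 1 ≤ c → c ≤ m + 1 → 1 - x c ≠ 0 := by
    intro c h1 h2
    have := (hx c h1 (by omega)).2
    intro h; linarith [sub_eq_zero.mp h]
  have hx1' : ∀ c, 1 ≤ c → c ≤ m → 1 - x c ≠ 0 := fun c h1 h2 => hx1 c h1 (by omega)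
  -- index arithmetic
  have e1 : m + 2 + k - 1 = m + 1 + k := by omega
  have e2 : m + 2 + k - (m + 1) + 1 = (k + 1) + 1 := by omega
  have e3 : m + 1 + k - (m + 1) + 1 = k + 1 := by omega
  have e4 : m + 1 - 1 = m := by omega
  rw [bvMultT, e1, bvPivotT, bvPivotT, e2, e3, e4]
  have hkm : k + m + 1 ≤ n := by omega
  rw [bvMinorT_eq n x (k + 1) (m + 1) (by omega) hx1,
      bvMinorT_eq n x (k + 1) m (by omega) hx1',
      bvMinorT_eq n x k (m + 1) (by omega) hx1,
      bvMinorT_eq n x k m (by omega) hx1']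
  -- nonvanishing
  have hBne : ∀ e s, e + s ≤ n + 1 → bvB n e s ≠ 0 := by
    intro e s hes
    simp only [bvB]
    apply Finset.prod_ne_zero_iff.mpr
    intro a _
    have : e + (a : ℕ) ≤ n := by have := a.isLt; omega
    exact_mod_cast (Nat.choose_pos this).ne'
  have hGne : ∀ e s, s ≤ m + 1 → bvG x n e s ≠ 0 := by
    intro e s hs
    simp only [bvG]
    apply Finset.prod_ne_zero_iff.mpr
    intro c _
    have hc1 : 1 - x ((c : ℕ) + 1) ≠ 0 := hx1 _ (by omega) (by have := c.isLt; omega)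
    have hc0 : x ((c : ℕ) + 1) ≠ 0 := (hx _ (by omega) (by have := c.isLt; omega)).1.ne'
    exact mul_ne_zero (pow_ne_zero _ hc1) (pow_ne_zero _ (div_ne_zero hc0 hc1))
  have ht : ∀ p q : ℕ, 1 ≤ p → p < q → q ≤ n + 1 →
      x p / (1 - x p) < x q / (1 - x q) := by
    intro p q h1 h2 h3
    obtain ⟨hp0, hp1⟩ := hx p h1 (by omega)
    obtain ⟨hq0, hq1⟩ := hx q (by omega) h3
    have := hmono p q h1 h2 h3
    rw [div_lt_div_iff₀ (by linarith) (by linarith)]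
    nlinarith
  have hVne : ∀ s, s ≤ m + 1 → bvV x s ≠ 0 := by
    intro s hs
    simp only [bvV]
    apply Finset.prod_ne_zero_iff.mpr
    intro a _
    apply Finset.prod_ne_zero_iff.mpr
    intro b hb
    have hab : a < b := Finset.mem_Ioi.mp hb
    have hab' : (a : ℕ) < (b : ℕ) := hab
    have := ht ((a : ℕ) + 1) ((b : ℕ) + 1) (by omega) (by omega)
      (by have := b.isLt; omega)
    exact sub_ne_zero.mpr (ne_of_gt this)
  have hTne : bvT x m ≠ 0 := by
    simp only [bvT]
    apply Finset.prod_ne_zero_iff.mpr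
    intro c _
    have hc1 : 1 - x ((c : ℕ) + 1) ≠ 0 := hx1 _ (by omega) (by have := c.isLt; omega)
    have hc0 : x ((c : ℕ) + 1) ≠ 0 := (hx _ (by omega) (by have := c.isLt; omega)).1.ne'
    exact div_ne_zero hc0 hc1
  have hcK : (n.choose k : ℝ) ≠ 0 := by
    exact_mod_cast (Nat.choose_pos (by omega : k ≤ n)).ne'
  have hcA : (n.choose (k + (m + 1)) : ℝ) ≠ 0 := by
    exact_mod_cast (Nat.choose_pos (by omega : k + (m + 1) ≤ n)).ne'
  have hcB : (n.choose (k + m) : ℝ) ≠ 0 := by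
    exact_mod_cast (Nat.choose_pos (by omega : k + m ≤ n)).ne'
  -- relations
  have hB1 := bvB_succ n k (m + 1)
  have hB0 := bvB_succ n k m
  have hG1 : bvG x n (k + 1) (m + 1)
      = bvG x n k (m + 1) * (bvT x m * (x (m + 1) / (1 - x (m + 1)))) := by
    rw [bvG_succ, bvT_succ]
  have hG0 : bvG x n (k + 1) m = bvG x n k m * bvT x m := bvG_succ x n k m
  have hB1' : bvB n (k + 1) (m + 1)
      = bvB n k (m + 1) * (n.choose (k + (m + 1)) : ℝ) / (n.choose k : ℝ) := by
    rw [eq_div_iff hcK]; linarith [hB1]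
  have hB0' : bvB n (k + 1) m
      = bvB n k m * (n.choose (k + m) : ℝ) / (n.choose k : ℝ) := by
    rw [eq_div_iff hcK]; linarith [hB0]
  rw [hB1', hB0', hG1, hG0]
  have hxm0 : x (m + 1) ≠ 0 := (hx (m + 1) (by omega) (by omega)).1.ne'
  have hxm1 : 1 - x (m + 1) ≠ 0 := hx1 (m + 1) (by omega) (by omega)
  have hmain : (bvB n k (m + 1) * (n.choose (k + (m + 1)) : ℝ) / (n.choose k : ℝ) *
      (bvG x n k (m + 1) * (bvT x m * (x (m + 1) / (1 - x (m + 1)))) * bvV x (m + 1)) /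
      (bvB n k m * (n.choose (k + m) : ℝ) / (n.choose k : ℝ) *
        (bvG x n k m * bvT x m * bvV x m))) /
      (bvB n k (m + 1) * (bvG x n k (m + 1) * bvV x (m + 1)) /
        (bvB n k m * (bvG x n k m * bvV x m)))
      = (n.choose (k + (m + 1)) : ℝ) / (n.choose (k + m) : ℝ) *
        (x (m + 1) / (1 - x (m + 1))) := by
    have htne : x (m + 1) / (1 - x (m + 1)) ≠ 0 := div_ne_zero hxm0 hxm1
    have hB1ne := hBne k (m + 1) (by omega)
    have hB0ne := hBne k m (by omega)
    have hG1ne := hGne k (m + 1) le_rfl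
    have hG0ne := hGne k m (by omega)
    have hV1ne := hVne (m + 1) le_rfl
    have hV0ne := hVne m (by omega)
    generalize x (m + 1) / (1 - x (m + 1)) = t at htne ⊢
    generalize bvB n k (m + 1) = B1 at hB1ne ⊢
    generalize bvB n k m = B0 at hB0ne ⊢
    generalize bvG x n k (m + 1) = G1 at hG1ne ⊢
    generalize bvG x n k m = G0 at hG0ne ⊢
    generalize bvV x (m + 1) = V1 at hV1ne ⊢
    generalize bvV x m = V0 at hV0ne ⊢
    generalize bvT x m = T0 at hTne ⊢
    generalize (n.choose (k + (m + 1)) : ℝ) = cA at hcA ⊢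
    generalize (n.choose (k + m) : ℝ) = cB at hcB ⊢
    generalize (n.choose k : ℝ) = cK at hcK ⊢
    field_simp
  rw [hmain]
  -- final arithmetic with the binomial recurrence
  have hch : (n.choose (k + m + 1) : ℝ) * ((k : ℝ) + (m : ℝ) + 1)
      = (n.choose (k + m) : ℝ) * ((n : ℝ) - ((k : ℝ) + (m : ℝ))) := by
    have h := Nat.choose_succ_right_eq n (k + m)
    have h2 : k + m ≤ n := by omega
    have h3 := congrArg (Nat.cast : ℕ → ℝ) h
    push_cast [Nat.cast_sub h2] at h3
    linarith
  have hAe : (n.choose (k + (m + 1)) : ℝ) = (n.choose (k + m + 1) : ℝ) := by norm_num [add_assoc]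
  rw [hAe]
  have hne1 : ((m : ℝ) + 2 + (k : ℝ)) - 1 ≠ 0 := by
    have h1 : (0 : ℝ) ≤ (m : ℝ) := Nat.cast_nonneg m
    have h2 : (0 : ℝ) ≤ (k : ℝ) := Nat.cast_nonneg k
    intro h; linarith
  push_cast
  rw [div_mul_div_comm, div_eq_div_iff (mul_ne_zero hcB hxm1) (mul_ne_zero hne1 hxm1)]
  linear_combination (x (m + 1) * (1 - x (m + 1))) * hch
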